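/- For all positive integers s and n, the sum of the coefficients of ∏_{j=1}^{n}(1−q^j)^s at exponents divisible by n+1 equals (n+1)^{s−1}·φ(n+1); that is, M_{s,n,n+1}(0) = Σ_{0 ≤ i ≤ N_{s,n}, (n+1) | i} t_{i,s,n} = (n+1)^{s−1}·φ(n+1), where φ is Euler's totient function. -/

import Mathlib

/-- `T s n` is the polynomial `∏_{j=1}^{n} (1 - q^j)^s`. -/
noncomputable def T (s n : ℕ) : Polynomial ℤ :=
  ∏ j ∈ Finset.Icc 1 n, (1 - Polynomial.X ^ j) ^ s

/-- `Nsn s n = s·n(n+1)/2`, the degree of `T s n`. -/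
def Nsn (s n : ℕ) : ℕ := s * n * (n + 1) / 2

/-- `M s n N j = Σ_{0 ≤ i ≤ N_{s,n}, i ≡ j (mod N)} t_{i,s,n}`. -/
noncomputable def M (s n N j : ℕ) : ℤ :=
  ∑ i ∈ (Finset.range (Nsn s n + 1)).filter (fun i => i % N = j), (T s n).coeff i

open Polynomial Finset Complex

lemma T_natDegree_le (s n : ℕ) : (T s n).natDegree ≤ Nsn s n := by
  refine le_trans (natDegree_prod_le _ _) ?_
  have h1 : ∑ j ∈ Finset.Icc 1 n, ((1 - Polynomial.X ^ j : Polynomial ℤ) ^ s).natDegree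
      ≤ ∑ j ∈ Finset.Icc 1 n, s * j := by
    refine Finset.sum_le_sum fun j _ => ?_
    refine le_trans natDegree_pow_le ?_
    exact Nat.mul_le_mul_left s (le_trans (natDegree_sub_le _ _) (by simp))
  refine le_trans h1 ?_
  rw [← Finset.mul_sum]
  have h2 : ∑ j ∈ Finset.Icc 1 n, j = n * (n + 1) / 2 := by
    have hins : Finset.range (n + 1) = insert 0 (Finset.Icc 1 n) := by
      ext x; simp [Nat.lt_succ_iff]; omega
    have h0 : (0 : ℕ) ∉ Finset.Icc 1 n := by simp
    have key := Finset.sum_range_id_mul_two (n + 1)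
    rw [hins, Finset.sum_insert h0, Nat.succ_sub_one, Nat.mul_comm (n+1) n] at key
    omega
  rw [h2, Nsn, mul_assoc, Nat.mul_div_assoc s (Nat.even_mul_succ_self n).two_dvd]

/-- Theorem (main1, `j = 0` case): the sum of coefficients of `∏_{j=1}^{n}(1-q^j)^s` at
exponents divisible by `n+1` equals `(n+1)^{s-1}·φ(n+1)`. -/
theorem stmt6 (s n : ℕ) (hs : 0 < s) (hn : 0 < n) :
    M s n (n + 1) 0 = (n + 1 : ℤ) ^ (s - 1) * (Nat.totient (n + 1) : ℤ) := by
  set N := n + 1 with hNdef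
  have hN : 0 < N := n.succ_pos
  obtain ⟨ω, hω⟩ : ∃ ω : ℂ, IsPrimitiveRoot ω N :=
    ⟨_, Complex.isPrimitiveRoot_exp N (Nat.succ_ne_zero n)⟩
  set P : Polynomial ℂ := (T s n).map (Int.castRingHom ℂ) with hP
  have hPdeg : P.natDegree < Nsn s n + 1 :=
    Nat.lt_succ_of_le (le_trans natDegree_map_le (T_natDegree_le s n))
  have hevalP : ∀ x : ℂ, P.eval x = ∏ j ∈ Finset.Icc 1 n, (1 - x ^ j) ^ s := by
    intro x
    simp [hP, T, Polynomial.map_prod, Polynomial.eval_prod]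
  -- geometric sum of powers of ω
  have hgeom : ∀ i : ℕ, (∑ k ∈ Finset.range N, (ω ^ i) ^ k) = if N ∣ i then (N : ℂ) else 0 := by
    intro i
    by_cases h : N ∣ i
    · rw [if_pos h, (hω.pow_eq_one_iff_dvd i).mpr h]; simp
    · rw [if_neg h]
      have h1 : ω ^ i ≠ 1 := fun hh => h ((hω.pow_eq_one_iff_dvd i).mp hh)
      rw [geom_sum_eq h1]
      have h2 : (ω ^ i) ^ N = 1 := by
        rw [← pow_mul, mul_comm, pow_mul, hω.pow_eq_one, one_pow]
      rw [h2, sub_self, zero_div]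
  -- Step 1 : roots of unity filter
  have key1 : ∑ k ∈ Finset.range N, P.eval (ω ^ k) = (N : ℂ) * (M s n N 0 : ℂ) := by
    have heval : ∀ k, P.eval (ω ^ k)
        = ∑ i ∈ Finset.range (Nsn s n + 1), P.coeff i * (ω ^ i) ^ k := by
      intro k
      rw [Polynomial.eval_eq_sum_range' hPdeg]
      refine Finset.sum_congr rfl fun i _ => ?_
      rw [← pow_mul, ← pow_mul, mul_comm i k]
    rw [Finset.sum_congr rfl fun k _ => heval k, Finset.sum_comm]
    have hstep : ∀ i, (∑ k ∈ Finset.range N, P.coeff i * (ω ^ i) ^ k)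
        = if i % N = 0 then (N : ℂ) * P.coeff i else 0 := by
      intro i
      rw [← Finset.mul_sum, hgeom]
      simp only [Nat.dvd_iff_mod_eq_zero]
      split_ifs <;> ring
    rw [Finset.sum_congr rfl fun i _ => hstep i, ← Finset.sum_filter]
    rw [M]
    push_cast
    rw [Finset.mul_sum]
    refine Finset.sum_congr rfl fun i _ => ?_
    rw [hP, Polynomial.coeff_map]
    simp
  -- Step 2 : evaluate at roots of unity
  have key2 : ∑ k ∈ Finset.range N, P.eval (ω ^ k)
      = (Nat.totient N : ℂ) * (N : ℂ) ^ s := by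
    have hval : ∀ k, P.eval (ω ^ k) = if N.Coprime k then (N : ℂ) ^ s else 0 := by
      intro k
      rw [hevalP]
      by_cases h : N.Coprime k
      · rw [if_pos h]
        have hprim : IsPrimitiveRoot (ω ^ k) (n + 1) := hω.pow_of_coprime k h.symm
        have hprod := hprim.prod_one_sub_pow_eq_order
        have hIcc : ∏ j ∈ Finset.Icc 1 n, (1 - (ω ^ k) ^ j)
            = ∏ j ∈ Finset.range n, (1 - (ω ^ k) ^ (j + 1)) := by
          rw [← Finset.Ico_add_one_right_eq_Icc, Finset.prod_Ico_eq_prod_range]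
          simp [add_comm]
        rw [Finset.prod_pow, hIcc, hprod]
        push_cast
        rw [hNdef, Nat.cast_add, Nat.cast_one, add_comm]
      · rw [if_neg h]
        set g := Nat.gcd k N with hg
        have hgN : g ∣ N := Nat.gcd_dvd_right k N
        have hg2 : 2 ≤ g := by
          have hgpos : 0 < g := Nat.gcd_pos_of_pos_right k hN
          have hg1 : g ≠ 1 := by
            intro h1
            have hc : Nat.Coprime k N := by rw [Nat.Coprime, ← hg]; exact h1
            exact h hc.symm
          omega
        set d := N / g with hd
        have hd1 : 1 ≤ d := Nat.one_le_div_iff (by omega) |>.mpr (Nat.le_of_dvd hN hgN)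
        have hdn : d ≤ n := by
          have h1 : d ≤ N / 2 := Nat.div_le_div_left hg2 (by omega)
          omega
        obtain ⟨m, hm⟩ := Nat.gcd_dvd_left k N
        have hkd : k * d = m * N := by
          rw [hm, ← hg, hd, mul_right_comm, Nat.mul_div_cancel' hgN, mul_comm]
        have hzero : (1 - (ω ^ k) ^ d) ^ s = 0 := by
          have : (ω ^ k) ^ d = 1 := by
            rw [← pow_mul, hkd, mul_comm, pow_mul, hω.pow_eq_one, one_pow]
          rw [this, sub_self, zero_pow hs.ne']
        exact Finset.prod_eq_zero (Finset.mem_Icc.mpr ⟨hd1, hdn⟩) hzero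
    rw [Finset.sum_congr rfl fun k _ => hval k, ← Finset.sum_filter, Finset.sum_const,
      nsmul_eq_mul]
    rw [Nat.totient_eq_card_coprime]
  -- Conclusion
  have hfinal : (N : ℂ) * (M s n N 0 : ℂ) = (Nat.totient N : ℂ) * (N : ℂ) ^ s := by
    rw [← key1, key2]
  have hNne : (N : ℂ) ≠ 0 := Nat.cast_ne_zero.mpr hN.ne'
  obtain ⟨t, rfl⟩ : ∃ t, s = t + 1 := ⟨s - 1, (Nat.succ_pred_eq_of_pos hs).symm⟩
  have hMC : (M (t + 1) n N 0 : ℂ) = (N : ℂ) ^ t * (Nat.totient N : ℂ) := by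
    apply mul_left_cancel₀ hNne
    rw [hfinal, pow_succ]
    ring
  rw [hNdef] at hMC
  rw [Nat.add_sub_cancel]
  exact_mod_cast hMC
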